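/- arXiv:1311.7170 — 2 statements merged into one kernel-verified Lean document; each statement's English description precedes it below -/
import Mathlib

section
/- (Uniform r/x ratio implies C1.) Suppose r_ij / x_ij = r_jk / x_jk for any two adjacent lines (i,j), (j,k) ∈ E, and v̲_i − 2 r_ij P̂⁺_ij(p̄) − 2 x_ij Q̂⁺_ij(q̄) > 0 for every line (i,j) with i not a leaf. Then C1 holds: for every leaf l and all 1 ≤ s ≤ t ≤ n_l, the vector A̲_{l_s} ⋯ A̲_{l_{t−1}} u_{l_t} is componentwise strictly positive; moreover its two components are in ratio r/x equal to the common line ratio. -/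
open Classical Finset

noncomputable section

/-- Product `A (bus s) * A (bus (s+1)) * ⋯ * A (bus (t-1))` applied to the vector `u`
(the empty product, when `s ≥ t`, is the identity). -/
def chainApply (A : ℕ → Matrix (Fin 2) (Fin 2) ℝ) (bus : ℕ → ℕ) (s t : ℕ)
    (u : Fin 2 → ℝ) : Fin 2 → ℝ :=
  if _ : s < t then (A (bus s)).mulVec (chainApply A bus (s + 1) t u) else u
termination_by t - s

/-- Number of steps from bus `l` to the root `0` along the parent map `par`
(the depth `n_l` of bus `l` in the tree). -/
def depth (par : ℕ → ℕ) (l : ℕ) : ℕ :=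
  if h : ∃ k, par^[k] l = 0 then Nat.find h else 0

/-- Bus `i` lies on the path `P_h` from bus `h` to the root. -/
def onPath (par : ℕ → ℕ) (i h : ℕ) : Prop := ∃ k, par^[k] h = i

/-- `P̂_{i,par i}(p) = Σ_{h : i ∈ P_h} p_h`, the linear-DistFlow power flow on line `(i, par i)`. -/
def hatP (n : ℕ) (par : ℕ → ℕ) (p : ℕ → ℝ) (i : ℕ) : ℝ :=
  ∑ h ∈ (Finset.Icc 1 n).filter (fun h => onPath par i h), p h

/-- The vector `u_i = (r_{i,par i}, x_{i,par i})ᵀ`. -/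
def uvec (r x : ℕ → ℝ) (i : ℕ) : Fin 2 → ℝ := ![r i, x i]

/-- The matrix `A̲_i = I − (2/v̲_i) u_i (P̂⁺_i(p̄), Q̂⁺_i(q̄))`. -/
def Amat (n : ℕ) (par : ℕ → ℕ) (r x vlow p q : ℕ → ℝ) (i : ℕ) :
    Matrix (Fin 2) (Fin 2) ℝ :=
  1 - (2 / vlow i) •
    Matrix.of (fun a b => uvec r x i a * ![max (hatP n par p i) 0, max (hatP n par q i) 0] b)

/-- A leaf bus: a bus in `{1,…,n}` with no children. -/
def IsLeaf (n : ℕ) (par : ℕ → ℕ) (l : ℕ) : Prop :=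
  1 ≤ l ∧ l ≤ n ∧ ∀ i, 1 ≤ i → i ≤ n → par i ≠ l

/-- Condition C1: `A̲_{l_s} ⋯ A̲_{l_{t-1}} u_{l_t} > 0` componentwise for every leaf `l`
and all `1 ≤ s ≤ t ≤ n_l`, where `l_k = par^[n_l − k] l`. -/
def C1 (n : ℕ) (par : ℕ → ℕ) (r x vlow p q : ℕ → ℝ) : Prop :=
  ∀ l, IsLeaf n par l → ∀ s t, 1 ≤ s → s ≤ t → t ≤ depth par l →
    ∀ a, 0 < chainApply (Amat n par r x vlow p q) (fun k => par^[depth par l - k] l) s t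
      (uvec r x (par^[depth par l - t] l)) a

lemma amat_mulVec (n : ℕ) (par : ℕ → ℕ) (r x vlow p q : ℕ → ℝ) (i : ℕ) (c : ℝ)
    (hvi : vlow i ≠ 0) :
    (Amat n par r x vlow p q i).mulVec (c • uvec r x i) =
      (c * ((vlow i - 2 * r i * max (hatP n par p i) 0 - 2 * x i * max (hatP n par q i) 0)
        / vlow i)) • uvec r x i := by
  funext a
  fin_cases a <;>
    simp [Amat, Matrix.mulVec, Matrix.one_apply, uvec, Fin.sum_univ_two, Matrix.sub_apply,
      Matrix.vecHead, Matrix.vecTail,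
      Matrix.cons_val_zero, Matrix.cons_val_one, Matrix.head_cons] <;> field_simp <;> ring

lemma iterate_le (par : ℕ → ℕ) (hpar0 : par 0 = 0) (hpar : ∀ i, 1 ≤ i → par i < i) :
    ∀ m l, par^[m] l ≤ l := by
  intro m
  induction m with
  | zero => simp
  | succ m ih =>
    intro l
    rw [Function.iterate_succ_apply]
    refine (ih (par l)).trans ?_
    rcases Nat.eq_zero_or_pos l with h | h
    · simp [h, hpar0]
    · exact (hpar l h).le

lemma exists_root (par : ℕ → ℕ) (hpar0 : par 0 = 0) (hpar : ∀ i, 1 ≤ i → par i < i) :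
    ∀ l, ∃ k, par^[k] l = 0 := by
  intro l
  induction l using Nat.strong_induction_on with
  | _ l ih =>
    rcases Nat.eq_zero_or_pos l with h | h
    · exact ⟨0, h⟩
    · obtain ⟨k, hk⟩ := ih (par l) (hpar l h)
      exact ⟨k + 1, by rwa [Function.iterate_succ_apply]⟩

/-- Claim 4 / Theorem 4(ii): if all lines have the same `r/x` ratio and
`v̲_i − 2 r_i P̂⁺_i(p̄) − 2 x_i Q̂⁺_i(q̄) > 0` for every line whose upper endpoint is not a leaf,
then C1 holds; moreover each product vector has components in the common ratio `r/x`. -/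
theorem c1_of_uniform_ratio (n : ℕ) (par : ℕ → ℕ) (r x vlow p q : ℕ → ℝ)
    (hpar0 : par 0 = 0) (hpar : ∀ i, 1 ≤ i → par i < i)
    (hr : ∀ i, 1 ≤ i → i ≤ n → 0 < r i) (hx : ∀ i, 1 ≤ i → i ≤ n → 0 < x i)
    (hv : ∀ i, 1 ≤ i → i ≤ n → 0 < vlow i)
    (hratio : ∀ i, 1 ≤ i → i ≤ n → 1 ≤ par i → r i / x i = r (par i) / x (par i))
    (hvolt : ∀ i, 1 ≤ i → i ≤ n → ¬ IsLeaf n par i →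
      0 < vlow i - 2 * r i * max (hatP n par p i) 0 - 2 * x i * max (hatP n par q i) 0) :
    ∀ l, IsLeaf n par l → ∀ s t, 1 ≤ s → s ≤ t → t ≤ depth par l →
      (∀ a, 0 < chainApply (Amat n par r x vlow p q) (fun k => par^[depth par l - k] l) s t
        (uvec r x (par^[depth par l - t] l)) a) ∧
      chainApply (Amat n par r x vlow p q) (fun k => par^[depth par l - k] l) s t
            (uvec r x (par^[depth par l - t] l)) 0 /
        chainApply (Amat n par r x vlow p q) (fun k => par^[depth par l - k] l) s t
            (uvec r x (par^[depth par l - t] l)) 1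
        = r (par^[depth par l - t] l) / x (par^[depth par l - t] l) := by
  intro l hl
  obtain ⟨hl1, hln, hleaf⟩ := hl
  set d := depth par l with hdd
  set bus : ℕ → ℕ := fun k => par^[d - k] l with hbusdef
  have h0 : ∃ k, par^[k] l = 0 := exists_root par hpar0 hpar l
  have hdfind : d = Nat.find h0 := by rw [hdd, depth, dif_pos h0]
  have hdspec : par^[d] l = 0 := by rw [hdfind]; exact Nat.find_spec h0
  have hdmin : ∀ m, m < d → par^[m] l ≠ 0 := by
    intro m hm
    rw [hdfind] at hm
    exact Nat.find_min h0 hm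
  have busle : ∀ k, bus k ≤ n := fun k =>
    (iterate_le par hpar0 hpar (d - k) l).trans hln
  have buspos : ∀ k, 1 ≤ k → k ≤ d → 1 ≤ bus k := by
    intro k hk1 hkd
    have : bus k ≠ 0 := hdmin (d - k) (by omega)
    omega
  have buspar : ∀ k, k + 1 ≤ d → par (bus (k + 1)) = bus k := by
    intro k hk
    show par (par^[d - (k+1)] l) = par^[d - k] l
    rw [← Function.iterate_succ_apply' par (d - (k+1)) l]
    congr 1
    omega
  -- ratio equality along the chain
  have hrat : ∀ j s, 1 ≤ s → s + j ≤ d →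
      r (bus (s + j)) / x (bus (s + j)) = r (bus s) / x (bus s) := by
    intro j
    induction j with
    | zero => intro s _ _; rfl
    | succ j ih =>
      intro s hs1 hsd
      have h1 : 1 ≤ bus (s + j + 1) := buspos _ (by omega) (by omega)
      have h2 : bus (s + j + 1) ≤ n := busle _
      have h3 : 1 ≤ par (bus (s + j + 1)) := by
        rw [buspar (s + j) (by omega)]; exact buspos _ (by omega) (by omega)
      have := hratio (bus (s + j + 1)) h1 h2 h3
      rw [buspar (s + j) (by omega)] at this
      have heq : s + (j + 1) = s + j + 1 := by omega
      rw [heq, this]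
      exact ih s hs1 (by omega)
  -- key induction
  have key : ∀ m s t, 1 ≤ s → s ≤ t → t ≤ d → t - s = m →
      ∃ c : ℝ, 0 < c ∧ chainApply (Amat n par r x vlow p q) bus s t (uvec r x (bus t))
        = c • uvec r x (bus t) := by
    intro m
    induction m with
    | zero =>
      intro s t hs hst htd hm
      have hts : ¬ s < t := by omega
      refine ⟨1, one_pos, ?_⟩
      rw [chainApply, dif_neg hts, one_smul]
    | succ m ih =>
      intro s t hs hst htd hm
      have hslt : s < t := by omega
      obtain ⟨c, hc, hEq⟩ := ih (s + 1) t (by omega) (by omega) htd (by omega)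
      have hxs : 0 < x (bus s) := hx _ (buspos s hs (by omega)) (busle s)
      have hxt : 0 < x (bus t) := hx _ (buspos t (by omega) htd) (busle t)
      have hvs : 0 < vlow (bus s) := hv _ (buspos s hs (by omega)) (busle s)
      -- uvec (bus t) is a positive multiple of uvec (bus s)
      have hratst : r (bus t) / x (bus t) = r (bus s) / x (bus s) := by
        have := hrat (t - s) s hs (by omega)
        rwa [show s + (t - s) = t by omega] at this
      have huvec : uvec r x (bus t) = (x (bus t) / x (bus s)) • uvec r x (bus s) := by
        funext a
        fin_cases a
        · show r (bus t) = (x (bus t) / x (bus s)) * r (bus s)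
          field_simp at hratst ⊢
          linarith [hratst]
        · show x (bus t) = (x (bus t) / x (bus s)) * x (bus s)
          field_simp
      have huvec2 : uvec r x (bus s) = (x (bus s) / x (bus t)) • uvec r x (bus t) := by
        rw [huvec, smul_smul]
        have hone : x (bus s) / x (bus t) * (x (bus t) / x (bus s)) = 1 := by
          field_simp
        rw [hone, one_smul]
      -- bus s is not a leaf
      have hnotleaf : ¬ IsLeaf n par (bus s) := by
        intro hleafs
        exact hleafs.2.2 (bus (s + 1)) (buspos (s+1) (by omega) (by omega)) (busle (s+1))
          (buspar s (by omega))
      have hfac := hvolt (bus s) (buspos s hs (by omega)) (busle s) hnotleaf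
      set c1 : ℝ := c * (x (bus t) / x (bus s)) *
        ((vlow (bus s) - 2 * r (bus s) * max (hatP n par p (bus s)) 0
          - 2 * x (bus s) * max (hatP n par q (bus s)) 0) / vlow (bus s)) with hc1
      have hstep : (Amat n par r x vlow p q (bus s)).mulVec (c • uvec r x (bus t))
          = (c1 * (x (bus s) / x (bus t))) • uvec r x (bus t) := by
        calc (Amat n par r x vlow p q (bus s)).mulVec (c • uvec r x (bus t))
            = (Amat n par r x vlow p q (bus s)).mulVec
                ((c * (x (bus t) / x (bus s))) • uvec r x (bus s)) := by
              rw [huvec, smul_smul]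
          _ = c1 • uvec r x (bus s) :=
              amat_mulVec n par r x vlow p q (bus s) _ (ne_of_gt hvs)
          _ = (c1 * (x (bus s) / x (bus t))) • uvec r x (bus t) := by
              rw [huvec2, smul_smul]
      refine ⟨c1 * (x (bus s) / x (bus t)), ?_, ?_⟩
      · have h1 : 0 < c * (x (bus t) / x (bus s)) := mul_pos hc (div_pos hxt hxs)
        exact mul_pos (mul_pos h1 (div_pos hfac hvs)) (div_pos hxs hxt)
      · rw [chainApply, dif_pos hslt, hEq, hstep]
  intro s t hs hst htd
  obtain ⟨c, hc, hEq⟩ := key (t - s) s t hs hst htd rfl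
  have hbt1 : 1 ≤ bus t := buspos t (by omega) htd
  have hbtn : bus t ≤ n := busle t
  have hrt : 0 < r (bus t) := hr _ hbt1 hbtn
  have hxt : 0 < x (bus t) := hx _ hbt1 hbtn
  have h0e : chainApply (Amat n par r x vlow p q) bus s t (uvec r x (bus t)) 0 = c * r (bus t) := by
    rw [hEq]; simp [uvec]
  have h1e : chainApply (Amat n par r x vlow p q) bus s t (uvec r x (bus t)) 1 = c * x (bus t) := by
    rw [hEq]; simp [uvec]
  constructor
  · intro a
    fin_cases a
    · rw [show (⟨0, by norm_num⟩ : Fin 2) = 0 from rfl, h0e]; exact mul_pos hc hrt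
    · rw [show (⟨1, by norm_num⟩ : Fin 2) = 1 from rfl, h1e]; exact mul_pos hc hxt
  · rw [h0e, h1e, mul_div_mul_left _ _ (ne_of_gt hc)]
end
end

section
/- (C1 via a linearized product condition.) Suppose that for every line (i,j) ∈ E the 2×2 matrix M_{ij} with entries M₁₁ = ∏_{(k,l)∈P_j}(1 − 2 r_kl P̂⁺_kl(p̄)/v̲_k), M₁₂ = −Σ_{(k,l)∈P_j} 2 r_kl Q̂⁺_kl(q̄)/v̲_k, M₂₁ = −Σ_{(k,l)∈P_j} 2 x_kl P̂⁺_kl(p̄)/v̲_k, M₂₂ = ∏_{(k,l)∈P_j}(1 − 2 x_kl Q̂⁺_kl(q̄)/v̲_k) satisfies M_{ij} (r_ij, x_ij)ᵀ > 0 componentwise. Then C1 holds: A̲_{l_s} ⋯ A̲_{l_{t−1}} u_{l_t} > 0 componentwise for every leaf l and all 1 ≤ s ≤ t ≤ n_l. -/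
open Classical Finset

noncomputable section

/-- The matrix of Claim 6: for a bus `j`, entries built from products/sums over the lines
`(k,l) ∈ P_j` on the path from `j` to the root (upper endpoints `par^[m] j`, `m < depth j`). -/
def Mmat (n : ℕ) (par : ℕ → ℕ) (r x vlow p q : ℕ → ℝ) (j : ℕ) :
    Matrix (Fin 2) (Fin 2) ℝ :=
  !![∏ m ∈ Finset.range (depth par j),
        (1 - 2 * r (par^[m] j) * max (hatP n par p (par^[m] j)) 0 / vlow (par^[m] j)),
     -∑ m ∈ Finset.range (depth par j),
        2 * r (par^[m] j) * max (hatP n par q (par^[m] j)) 0 / vlow (par^[m] j);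
     -∑ m ∈ Finset.range (depth par j),
        2 * x (par^[m] j) * max (hatP n par p (par^[m] j)) 0 / vlow (par^[m] j),
     ∏ m ∈ Finset.range (depth par j),
        (1 - 2 * x (par^[m] j) * max (hatP n par q (par^[m] j)) 0 / vlow (par^[m] j))]

-- ################ auxiliary development ################

/-- The coefficient `2 r_i P̂⁺_i / v̲_i` of a line. -/
def lineA (n : ℕ) (par : ℕ → ℕ) (r vlow p : ℕ → ℝ) (i : ℕ) : ℝ :=
  2 * r i * max (hatP n par p i) 0 / vlow i

lemma lineA_nonneg (n : ℕ) (par : ℕ → ℕ) (r vlow p : ℕ → ℝ) (i : ℕ)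
    (h1 : 0 ≤ r i) (h2 : 0 ≤ vlow i) : 0 ≤ lineA n par r vlow p i := by
  unfold lineA
  apply div_nonneg _ h2
  have : (0:ℝ) ≤ max (hatP n par p i) 0 := le_max_right _ _
  nlinarith

lemma mulVec_two0 (a b c d : ℝ) (w : Fin 2 → ℝ) :
    ((!![a, b; c, d]).mulVec w) 0 = a * w 0 + b * w 1 := by
  simp [Matrix.mulVec, dotProduct, Fin.sum_univ_two]

lemma mulVec_two1 (a b c d : ℝ) (w : Fin 2 → ℝ) :
    ((!![a, b; c, d]).mulVec w) 1 = c * w 0 + d * w 1 := by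
  simp [Matrix.mulVec, dotProduct, Fin.sum_univ_two]

lemma Mmat_eq (n : ℕ) (par : ℕ → ℕ) (r x vlow p q : ℕ → ℝ) (j : ℕ) :
    Mmat n par r x vlow p q j =
      !![∏ m ∈ Finset.range (depth par j), (1 - lineA n par r vlow p (par^[m] j)),
         -∑ m ∈ Finset.range (depth par j), lineA n par r vlow q (par^[m] j);
         -∑ m ∈ Finset.range (depth par j), lineA n par x vlow p (par^[m] j),
         ∏ m ∈ Finset.range (depth par j), (1 - lineA n par x vlow q (par^[m] j))] := rfl

lemma Amat_eq (n : ℕ) (par : ℕ → ℕ) (r x vlow p q : ℕ → ℝ) (i : ℕ) :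
    Amat n par r x vlow p q i =
      !![1 - lineA n par r vlow p i, -(lineA n par r vlow q i);
         -(lineA n par x vlow p i), 1 - lineA n par x vlow q i] := by
  ext a b
  fin_cases a <;> fin_cases b <;>
    simp [Amat, uvec, lineA, Matrix.one_apply] <;> ring

lemma par_le_self (par : ℕ → ℕ) (hpar0 : par 0 = 0) (hpar : ∀ i, 1 ≤ i → par i < i)
    (j : ℕ) : par j ≤ j := by
  rcases Nat.eq_zero_or_pos j with h | h
  · simp [h, hpar0]
  · exact (hpar j h).le

lemma iterate_par_le (par : ℕ → ℕ) (hpar0 : par 0 = 0) (hpar : ∀ i, 1 ≤ i → par i < i)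
    (k l : ℕ) : par^[k] l ≤ l := by
  induction k with
  | zero => simp
  | succ k ih =>
      rw [Function.iterate_succ_apply']
      exact le_trans (par_le_self par hpar0 hpar _) ih

lemma iterate_par_zero (par : ℕ → ℕ) (hpar0 : par 0 = 0) (hpar : ∀ i, 1 ≤ i → par i < i) :
    ∀ m j, j ≤ m → par^[m] j = 0 := by
  intro m
  induction m with
  | zero => intro j hj; interval_cases j; rfl
  | succ m ih =>
      intro j hj
      rcases Nat.eq_zero_or_pos j with h | h
      · subst h
        rw [Function.iterate_succ_apply, hpar0]
        exact ih 0 (Nat.zero_le _)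
      · rw [Function.iterate_succ_apply]
        exact ih (par j) (by have := hpar j h; omega)

lemma depth_ex (par : ℕ → ℕ) (hpar0 : par 0 = 0) (hpar : ∀ i, 1 ≤ i → par i < i)
    (l : ℕ) : ∃ k, par^[k] l = 0 :=
  ⟨l, iterate_par_zero par hpar0 hpar l l le_rfl⟩

lemma depth_def (par : ℕ → ℕ) (hpar0 : par 0 = 0) (hpar : ∀ i, 1 ≤ i → par i < i)
    (l : ℕ) : depth par l = Nat.find (depth_ex par hpar0 hpar l) := by
  unfold depth
  rw [dif_pos (depth_ex par hpar0 hpar l)]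

lemma depth_spec (par : ℕ → ℕ) (hpar0 : par 0 = 0) (hpar : ∀ i, 1 ≤ i → par i < i)
    (l : ℕ) : par^[depth par l] l = 0 := by
  rw [depth_def par hpar0 hpar l]
  exact Nat.find_spec (depth_ex par hpar0 hpar l)

lemma depth_min (par : ℕ → ℕ) (hpar0 : par 0 = 0) (hpar : ∀ i, 1 ≤ i → par i < i)
    {k l : ℕ} (h : k < depth par l) : par^[k] l ≠ 0 := by
  rw [depth_def par hpar0 hpar l] at h
  exact Nat.find_min (depth_ex par hpar0 hpar l) h

lemma depth_iterate (par : ℕ → ℕ) (hpar0 : par 0 = 0) (hpar : ∀ i, 1 ≤ i → par i < i)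
    {k l : ℕ} (h : k ≤ depth par l) : depth par (par^[k] l) = depth par l - k := by
  rw [depth_def par hpar0 hpar (par^[k] l)]
  apply le_antisymm
  · apply Nat.find_le
    rw [← Function.iterate_add_apply, Nat.sub_add_cancel h]
    exact depth_spec par hpar0 hpar l
  · by_contra hcon
    push_neg at hcon
    have h2 := Nat.find_spec (depth_ex par hpar0 hpar (par^[k] l))
    rw [← Function.iterate_add_apply] at h2
    exact depth_min par hpar0 hpar
      (show Nat.find (depth_ex par hpar0 hpar (par^[k] l)) + k < depth par l by omega) h2

/-- The key 2×2-chain positivity lemma. -/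
lemma chain_pos (A : ℕ → Matrix (Fin 2) (Fin 2) ℝ) (bus : ℕ → ℕ)
    (a b c d : ℕ → ℝ) (s t : ℕ) (hst : s ≤ t)
    (hA : ∀ k, s ≤ k → k < t → A (bus k) = !![1 - a k, -(b k); -(c k), 1 - d k])
    (hb : ∀ k, s ≤ k → k < t → 0 ≤ b k) (hc : ∀ k, s ≤ k → k < t → 0 ≤ c k)
    (ha : ∀ k, s ≤ k → k < t → 0 < 1 - a k ∧ 1 - a k ≤ 1)
    (hd : ∀ k, s ≤ k → k < t → 0 < 1 - d k ∧ 1 - d k ≤ 1)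
    (r0 x0 : ℝ) (hr0 : 0 < r0) (hx0 : 0 < x0)
    (h1 : 0 < (∏ k ∈ Finset.Ico s t, (1 - a k)) * r0 - (∑ k ∈ Finset.Ico s t, b k) * x0)
    (h2 : 0 < (∏ k ∈ Finset.Ico s t, (1 - d k)) * x0 - (∑ k ∈ Finset.Ico s t, c k) * r0) :
    ∀ a0, 0 < chainApply A bus s t ![r0, x0] a0 := by
  -- monotonicity of the lower bounds
  have hmonoa : ∀ k, s ≤ k → k ≤ t →
      (∏ m ∈ Finset.Ico s t, (1 - a m)) * r0 - (∑ m ∈ Finset.Ico s t, b m) * x0 ≤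
      (∏ m ∈ Finset.Ico k t, (1 - a m)) * r0 - (∑ m ∈ Finset.Ico k t, b m) * x0 := by
    intro k hks hkt
    have eP := Finset.prod_Ico_consecutive (fun m => (1 - a m)) hks hkt
    have eS := Finset.sum_Ico_consecutive (fun m => b m) hks hkt
    have hP1 : ∏ m ∈ Finset.Ico s k, (1 - a m) ≤ 1 :=
      Finset.prod_le_one (fun m hm => by
          simp only [Finset.mem_Ico] at hm; exact (ha m hm.1 (by omega)).1.le)
        (fun m hm => by
          simp only [Finset.mem_Ico] at hm; exact (ha m hm.1 (by omega)).2)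
    have hP2 : 0 < ∏ m ∈ Finset.Ico k t, (1 - a m) :=
      Finset.prod_pos (fun m hm => by
        simp only [Finset.mem_Ico] at hm; exact (ha m (by omega) hm.2).1)
    have hS1 : 0 ≤ ∑ m ∈ Finset.Ico s k, b m :=
      Finset.sum_nonneg (fun m hm => by
        simp only [Finset.mem_Ico] at hm; exact hb m hm.1 (by omega))
    have k1 : (∏ m ∈ Finset.Ico s t, (1 - a m)) ≤ ∏ m ∈ Finset.Ico k t, (1 - a m) := by
      have := mul_le_mul_of_nonneg_right hP1 hP2.le
      rw [one_mul] at this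
      calc ∏ m ∈ Finset.Ico s t, (1 - a m)
          = (∏ m ∈ Finset.Ico s k, (1 - a m)) * ∏ m ∈ Finset.Ico k t, (1 - a m) := eP.symm
        _ ≤ _ := this
    have k2 : (∑ m ∈ Finset.Ico k t, b m) ≤ ∑ m ∈ Finset.Ico s t, b m := by
      calc ∑ m ∈ Finset.Ico k t, b m
          ≤ (∑ m ∈ Finset.Ico s k, b m) + ∑ m ∈ Finset.Ico k t, b m := by linarith
        _ = _ := eS
    have := mul_le_mul_of_nonneg_right k1 hr0.le
    have := mul_le_mul_of_nonneg_right k2 hx0.le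
    linarith
  have hmonod : ∀ k, s ≤ k → k ≤ t →
      (∏ m ∈ Finset.Ico s t, (1 - d m)) * x0 - (∑ m ∈ Finset.Ico s t, c m) * r0 ≤
      (∏ m ∈ Finset.Ico k t, (1 - d m)) * x0 - (∑ m ∈ Finset.Ico k t, c m) * r0 := by
    intro k hks hkt
    have eP := Finset.prod_Ico_consecutive (fun m => (1 - d m)) hks hkt
    have eS := Finset.sum_Ico_consecutive (fun m => c m) hks hkt
    have hP1 : ∏ m ∈ Finset.Ico s k, (1 - d m) ≤ 1 :=
      Finset.prod_le_one (fun m hm => by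
          simp only [Finset.mem_Ico] at hm; exact (hd m hm.1 (by omega)).1.le)
        (fun m hm => by
          simp only [Finset.mem_Ico] at hm; exact (hd m hm.1 (by omega)).2)
    have hP2 : 0 < ∏ m ∈ Finset.Ico k t, (1 - d m) :=
      Finset.prod_pos (fun m hm => by
        simp only [Finset.mem_Ico] at hm; exact (hd m (by omega) hm.2).1)
    have hS1 : 0 ≤ ∑ m ∈ Finset.Ico s k, c m :=
      Finset.sum_nonneg (fun m hm => by
        simp only [Finset.mem_Ico] at hm; exact hc m hm.1 (by omega))
    have k1 : (∏ m ∈ Finset.Ico s t, (1 - d m)) ≤ ∏ m ∈ Finset.Ico k t, (1 - d m) := by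
      have := mul_le_mul_of_nonneg_right hP1 hP2.le
      rw [one_mul] at this
      calc ∏ m ∈ Finset.Ico s t, (1 - d m)
          = (∏ m ∈ Finset.Ico s k, (1 - d m)) * ∏ m ∈ Finset.Ico k t, (1 - d m) := eP.symm
        _ ≤ _ := this
    have k2 : (∑ m ∈ Finset.Ico k t, c m) ≤ ∑ m ∈ Finset.Ico s t, c m := by
      calc ∑ m ∈ Finset.Ico k t, c m
          ≤ (∑ m ∈ Finset.Ico s k, c m) + ∑ m ∈ Finset.Ico k t, c m := by linarith
        _ = _ := eS
    have := mul_le_mul_of_nonneg_right k1 hx0.le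
    have := mul_le_mul_of_nonneg_right k2 hr0.le
    linarith
  -- invariant
  have key : ∀ j k, s ≤ k → k ≤ t → t - k = j →
      ((∏ m ∈ Finset.Ico k t, (1 - a m)) * r0 - (∑ m ∈ Finset.Ico k t, b m) * x0
          ≤ chainApply A bus k t ![r0, x0] 0 ∧ chainApply A bus k t ![r0, x0] 0 ≤ r0) ∧
      ((∏ m ∈ Finset.Ico k t, (1 - d m)) * x0 - (∑ m ∈ Finset.Ico k t, c m) * r0
          ≤ chainApply A bus k t ![r0, x0] 1 ∧ chainApply A bus k t ![r0, x0] 1 ≤ x0) := by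
    intro j
    induction j with
    | zero =>
        intro k h1k h2k h3k
        have hkt : k = t := by omega
        subst hkt
        rw [chainApply, dif_neg (lt_irrefl k)]
        simp
    | succ j ih =>
        intro k hks hkt hj
        have hklt : k < t := by omega
        obtain ⟨⟨hw0lb, hw0ub⟩, ⟨hw1lb, hw1ub⟩⟩ := ih (k+1) (by omega) (by omega) (by omega)
        set w := chainApply A bus (k+1) t ![r0, x0] with hw
        have hw0pos : 0 < w 0 :=
          lt_of_lt_of_le (lt_of_lt_of_le h1 (hmonoa (k+1) (by omega) (by omega))) hw0lb
        have hw1pos : 0 < w 1 :=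
          lt_of_lt_of_le (lt_of_lt_of_le h2 (hmonod (k+1) (by omega) (by omega))) hw1lb
        have hstep : chainApply A bus k t ![r0, x0] = (A (bus k)).mulVec w := by
          rw [chainApply, dif_pos hklt]
        have hc0 : chainApply A bus k t ![r0, x0] 0 = (1 - a k) * w 0 + (-(b k)) * w 1 := by
          rw [hstep, hA k hks hklt, mulVec_two0]
        have hc1 : chainApply A bus k t ![r0, x0] 1 = (-(c k)) * w 0 + (1 - d k) * w 1 := by
          rw [hstep, hA k hks hklt, mulVec_two1]
        obtain ⟨ha1, ha2⟩ := ha k hks hklt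
        obtain ⟨hd1, hd2⟩ := hd k hks hklt
        have hbk := hb k hks hklt
        have hck := hc k hks hklt
        have hSb : 0 ≤ ∑ m ∈ Finset.Ico (k+1) t, b m :=
          Finset.sum_nonneg (fun m hm => by
            simp only [Finset.mem_Ico] at hm; exact hb m (by omega) hm.2)
        have hSc : 0 ≤ ∑ m ∈ Finset.Ico (k+1) t, c m :=
          Finset.sum_nonneg (fun m hm => by
            simp only [Finset.mem_Ico] at hm; exact hc m (by omega) hm.2)
        have hPa := Finset.prod_eq_prod_Ico_succ_bot hklt (fun m => (1 - a m))
        have hPd := Finset.prod_eq_prod_Ico_succ_bot hklt (fun m => (1 - d m))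
        have hSb' := Finset.sum_eq_sum_Ico_succ_bot hklt (fun m => b m)
        have hSc' := Finset.sum_eq_sum_Ico_succ_bot hklt (fun m => c m)
        refine ⟨⟨?_, ?_⟩, ⟨?_, ?_⟩⟩
        · rw [hc0, hPa, hSb']
          nlinarith [mul_le_mul_of_nonneg_left hw0lb ha1.le,
            mul_le_mul_of_nonneg_left hw1ub hbk,
            mul_le_mul_of_nonneg_right (mul_le_of_le_one_left hSb ha2) hx0.le]
        · rw [hc0]
          have u1 : (1 - a k) * w 0 ≤ w 0 := mul_le_of_le_one_left hw0pos.le ha2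
          have u2 : 0 ≤ b k * w 1 := mul_nonneg hbk hw1pos.le
          linarith
        · rw [hc1, hPd, hSc']
          nlinarith [mul_le_mul_of_nonneg_left hw1lb hd1.le,
            mul_le_mul_of_nonneg_left hw0ub hck,
            mul_le_mul_of_nonneg_right (mul_le_of_le_one_left hSc hd2) hr0.le]
        · rw [hc1]
          have u1 : (1 - d k) * w 1 ≤ w 1 := mul_le_of_le_one_left hw1pos.le hd2
          have u2 : 0 ≤ c k * w 0 := mul_nonneg hck hw0pos.le
          linarith
  intro a0
  obtain ⟨⟨k0, -⟩, ⟨k1, -⟩⟩ := key (t - s) s le_rfl hst rfl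
  fin_cases a0
  · exact lt_of_lt_of_le h1 k0
  · exact lt_of_lt_of_le h2 k1
/-- Claim 6 / Theorem 4(v): if for every line `(i,j) ∈ E` (so `j = par i`) the matrix `M_{ij}`
applied to `(r_{ij}, x_{ij})ᵀ` is componentwise strictly positive, then C1 holds. -/
theorem c1_of_product_condition (n : ℕ) (par : ℕ → ℕ) (r x vlow p q : ℕ → ℝ)
    (hpar0 : par 0 = 0) (hpar : ∀ i, 1 ≤ i → par i < i)
    (hr : ∀ i, 1 ≤ i → i ≤ n → 0 < r i) (hx : ∀ i, 1 ≤ i → i ≤ n → 0 < x i)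
    (hv : ∀ i, 1 ≤ i → i ≤ n → 0 < vlow i)
    (hM : ∀ i, 1 ≤ i → i ≤ n →
      ∀ a, 0 < (Mmat n par r x vlow p q (par i)).mulVec (uvec r x i) a) :
    C1 n par r x vlow p q := by
  intro l hl s t hs hst htN
  obtain ⟨hl1, hln, -⟩ := hl
  set N := depth par l with hN
  set busf : ℕ → ℕ := fun k => par^[N - k] l with hbusf
  have hts : 1 ≤ t := le_trans hs hst
  have hbusfk : ∀ k, busf k = par^[N - k] l := fun k => by rw [hbusf]
  have hbus_pos : ∀ k, 1 ≤ k → k ≤ N → 1 ≤ busf k := by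
    intro k h1 h2
    have h3 : N - k < depth par l := by omega
    have h4 := depth_min par hpar0 hpar h3
    rw [← hbusfk k] at h4
    omega
  have hbus_le : ∀ k, busf k ≤ n := by
    intro k
    rw [hbusfk k]
    exact le_trans (iterate_par_le par hpar0 hpar _ l) hln
  have hbus_iter : ∀ k m, m ≤ k → k ≤ N → par^[m] (busf k) = busf (k - m) := by
    intro k m hmk hkN
    rw [hbusfk k, hbusfk (k - m), ← Function.iterate_add_apply]
    congr 1
    omega
  have hbus_depth : ∀ k, k ≤ N → depth par (busf k) = k := by
    intro k hk
    rw [hbusfk k]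
    have h1 : N - k ≤ depth par l := by omega
    rw [depth_iterate par hpar0 hpar h1]
    omega
  have hbus_par : ∀ k, k + 1 ≤ N → par (busf (k + 1)) = busf k := by
    intro k hk
    have h := hbus_iter (k + 1) 1 (by omega) hk
    simpa using h
  -- reindexing of path products/sums
  have reidxP : ∀ (g : ℕ → ℝ) (m : ℕ), m ≤ N →
      ∏ j ∈ Finset.range (depth par (busf m)), g (par^[j] (busf m))
        = ∏ j ∈ Finset.range m, g (busf (j + 1)) := by
    intro g m hm
    rw [hbus_depth m hm, ← Finset.prod_range_reflect (fun j => g (busf (j + 1))) m]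
    apply Finset.prod_congr rfl
    intro j hj
    simp only [Finset.mem_range] at hj
    rw [hbus_iter m j hj.le hm]
    show g (busf (m - j)) = g (busf (m - 1 - j + 1))
    congr 2
    omega
  have reidxS : ∀ (g : ℕ → ℝ) (m : ℕ), m ≤ N →
      ∑ j ∈ Finset.range (depth par (busf m)), g (par^[j] (busf m))
        = ∑ j ∈ Finset.range m, g (busf (j + 1)) := by
    intro g m hm
    rw [hbus_depth m hm, ← Finset.sum_range_reflect (fun j => g (busf (j + 1))) m]
    apply Finset.sum_congr rfl
    intro j hj
    simp only [Finset.mem_range] at hj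
    rw [hbus_iter m j hj.le hm]
    show g (busf (m - j)) = g (busf (m - 1 - j + 1))
    congr 2
    omega
  -- nonnegativity of the line coefficients
  have hlineA : ∀ (g : ℕ → ℝ), (∀ i, 1 ≤ i → i ≤ n → 0 < g i) → ∀ (w : ℕ → ℝ) (k : ℕ),
      1 ≤ k → k ≤ N → 0 ≤ lineA n par g vlow w (busf k) := by
    intro g hg w k h1 h2
    exact lineA_nonneg n par g vlow w (busf k) (hg _ (hbus_pos k h1 h2) (hbus_le k)).le
      (hv _ (hbus_pos k h1 h2) (hbus_le k)).le
  -- the M-matrix condition, reindexed along the chain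
  have hMrow : ∀ m, m + 1 ≤ t →
      0 < (∏ j ∈ Finset.range m, (1 - lineA n par r vlow p (busf (j + 1)))) * r (busf (m + 1))
          - (∑ j ∈ Finset.range m, lineA n par r vlow q (busf (j + 1))) * x (busf (m + 1)) ∧
      0 < (∏ j ∈ Finset.range m, (1 - lineA n par x vlow q (busf (j + 1)))) * x (busf (m + 1))
          - (∑ j ∈ Finset.range m, lineA n par x vlow p (busf (j + 1))) * r (busf (m + 1)) := by
    intro m hmt
    have hm1N : m + 1 ≤ N := le_trans hmt htN
    have hb1 := hbus_pos (m + 1) (by omega) hm1N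
    have hb2 := hbus_le (m + 1)
    have h00 := hM (busf (m + 1)) hb1 hb2 0
    have h11 := hM (busf (m + 1)) hb1 hb2 1
    rw [hbus_par m hm1N, Mmat_eq] at h00 h11
    rw [mulVec_two0] at h00
    rw [mulVec_two1] at h11
    rw [reidxP (fun i => 1 - lineA n par r vlow p i) m (by omega),
        reidxS (fun i => lineA n par r vlow q i) m (by omega)] at h00
    rw [reidxP (fun i => 1 - lineA n par x vlow q i) m (by omega),
        reidxS (fun i => lineA n par x vlow p i) m (by omega)] at h11
    have e0 : uvec r x (busf (m + 1)) 0 = r (busf (m + 1)) := rfl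
    have e1 : uvec r x (busf (m + 1)) 1 = x (busf (m + 1)) := rfl
    rw [e0, e1] at h00 h11
    constructor
    · linarith
    · linarith
  -- positivity of the partial diagonal products
  have hProdPos : ∀ m, m + 1 ≤ t →
      (0 < ∏ j ∈ Finset.range m, (1 - lineA n par r vlow p (busf (j + 1)))) ∧
      (0 < ∏ j ∈ Finset.range m, (1 - lineA n par x vlow q (busf (j + 1)))) := by
    intro m hmt
    obtain ⟨h1', h2'⟩ := hMrow m hmt
    have hb1 := hbus_pos (m + 1) (by omega) (le_trans hmt htN)
    have hb2 := hbus_le (m + 1)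
    have hrb := hr _ hb1 hb2
    have hxb := hx _ hb1 hb2
    have hSb : 0 ≤ ∑ j ∈ Finset.range m, lineA n par r vlow q (busf (j + 1)) :=
      Finset.sum_nonneg fun j hj => by
        simp only [Finset.mem_range] at hj
        exact hlineA r hr q (j + 1) (by omega) (by omega)
    have hSc : 0 ≤ ∑ j ∈ Finset.range m, lineA n par x vlow p (busf (j + 1)) :=
      Finset.sum_nonneg fun j hj => by
        simp only [Finset.mem_range] at hj
        exact hlineA x hx p (j + 1) (by omega) (by omega)
    constructor
    · by_contra hcon
      push_neg at hcon
      nlinarith [mul_nonneg (neg_nonneg.mpr hcon) hrb.le, mul_nonneg hSb hxb.le]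
    · by_contra hcon
      push_neg at hcon
      nlinarith [mul_nonneg (neg_nonneg.mpr hcon) hxb.le, mul_nonneg hSc hrb.le]
  -- each diagonal factor on the path is positive
  have hFa : ∀ k, 1 ≤ k → k < t → 0 < 1 - lineA n par r vlow p (busf k) := by
    intro k h1k h2k
    have hk1 := (hProdPos k (by omega)).1
    have hk0 := (hProdPos (k - 1) (by omega)).1
    have hk : k = (k - 1) + 1 := by omega
    rw [hk, Finset.prod_range_succ, ← hk] at hk1
    by_contra hcon
    push_neg at hcon
    nlinarith [mul_nonneg hk0.le (neg_nonneg.mpr hcon)]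
  have hFd : ∀ k, 1 ≤ k → k < t → 0 < 1 - lineA n par x vlow q (busf k) := by
    intro k h1k h2k
    have hk1 := (hProdPos k (by omega)).2
    have hk0 := (hProdPos (k - 1) (by omega)).2
    have hk : k = (k - 1) + 1 := by omega
    rw [hk, Finset.prod_range_succ, ← hk] at hk1
    by_contra hcon
    push_neg at hcon
    nlinarith [mul_nonneg hk0.le (neg_nonneg.mpr hcon)]
  -- range → Ico conversion
  have hIcoP : ∀ f : ℕ → ℝ, ∏ j ∈ Finset.range (t - 1), f (j + 1) = ∏ k ∈ Finset.Ico 1 t, f k := by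
    intro f
    rw [Finset.prod_Ico_eq_prod_range]
    apply Finset.prod_congr rfl
    intro j _
    congr 1
    omega
  have hIcoS : ∀ f : ℕ → ℝ, ∑ j ∈ Finset.range (t - 1), f (j + 1) = ∑ k ∈ Finset.Ico 1 t, f k := by
    intro f
    rw [Finset.sum_Ico_eq_sum_range]
    apply Finset.sum_congr rfl
    intro j _
    congr 1
    omega
  obtain ⟨hrow1, hrow2⟩ := hMrow (t - 1) (by omega)
  have ht1 : t - 1 + 1 = t := by omega
  rw [ht1] at hrow1 hrow2
  rw [hIcoP (fun k => 1 - lineA n par r vlow p (busf k)),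
      hIcoS (fun k => lineA n par r vlow q (busf k))] at hrow1
  rw [hIcoP (fun k => 1 - lineA n par x vlow q (busf k)),
      hIcoS (fun k => lineA n par x vlow p (busf k))] at hrow2
  have hri : 0 < r (busf t) := hr _ (hbus_pos t hts htN) (hbus_le t)
  have hxi : 0 < x (busf t) := hx _ (hbus_pos t hts htN) (hbus_le t)
  -- restrict the global condition from Ico 1 t to Ico s t
  have key1 : 0 < (∏ k ∈ Finset.Ico s t, (1 - lineA n par r vlow p (busf k))) * r (busf t)
      - (∑ k ∈ Finset.Ico s t, lineA n par r vlow q (busf k)) * x (busf t) := by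
    have eP := Finset.prod_Ico_consecutive (fun k => 1 - lineA n par r vlow p (busf k)) hs hst
    have eS := Finset.sum_Ico_consecutive (fun k => lineA n par r vlow q (busf k)) hs hst
    have hP1 : ∏ k ∈ Finset.Ico 1 s, (1 - lineA n par r vlow p (busf k)) ≤ 1 :=
      Finset.prod_le_one
        (fun k hk => by simp only [Finset.mem_Ico] at hk; exact (hFa k hk.1 (by omega)).le)
        (fun k hk => by
          simp only [Finset.mem_Ico] at hk
          have := hlineA r hr p k hk.1 (by omega)
          linarith)
    have hP2 : 0 < ∏ k ∈ Finset.Ico s t, (1 - lineA n par r vlow p (busf k)) :=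
      Finset.prod_pos fun k hk => by
        simp only [Finset.mem_Ico] at hk; exact hFa k (by omega) hk.2
    have hS1 : 0 ≤ ∑ k ∈ Finset.Ico 1 s, lineA n par r vlow q (busf k) :=
      Finset.sum_nonneg fun k hk => by
        simp only [Finset.mem_Ico] at hk; exact hlineA r hr q k hk.1 (by omega)
    have k1 : (∏ k ∈ Finset.Ico 1 t, (1 - lineA n par r vlow p (busf k)))
        ≤ ∏ k ∈ Finset.Ico s t, (1 - lineA n par r vlow p (busf k)) := by
      rw [← eP]
      nlinarith
    have k2 : (∑ k ∈ Finset.Ico s t, lineA n par r vlow q (busf k))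
        ≤ ∑ k ∈ Finset.Ico 1 t, lineA n par r vlow q (busf k) := by
      rw [← eS]; linarith
    have m1 := mul_le_mul_of_nonneg_right k1 hri.le
    have m2 := mul_le_mul_of_nonneg_right k2 hxi.le
    linarith
  have key2 : 0 < (∏ k ∈ Finset.Ico s t, (1 - lineA n par x vlow q (busf k))) * x (busf t)
      - (∑ k ∈ Finset.Ico s t, lineA n par x vlow p (busf k)) * r (busf t) := by
    have eP := Finset.prod_Ico_consecutive (fun k => 1 - lineA n par x vlow q (busf k)) hs hst
    have eS := Finset.sum_Ico_consecutive (fun k => lineA n par x vlow p (busf k)) hs hst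
    have hP1 : ∏ k ∈ Finset.Ico 1 s, (1 - lineA n par x vlow q (busf k)) ≤ 1 :=
      Finset.prod_le_one
        (fun k hk => by simp only [Finset.mem_Ico] at hk; exact (hFd k hk.1 (by omega)).le)
        (fun k hk => by
          simp only [Finset.mem_Ico] at hk
          have := hlineA x hx q k hk.1 (by omega)
          linarith)
    have hP2 : 0 < ∏ k ∈ Finset.Ico s t, (1 - lineA n par x vlow q (busf k)) :=
      Finset.prod_pos fun k hk => by
        simp only [Finset.mem_Ico] at hk; exact hFd k (by omega) hk.2
    have hS1 : 0 ≤ ∑ k ∈ Finset.Ico 1 s, lineA n par x vlow p (busf k) :=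
      Finset.sum_nonneg fun k hk => by
        simp only [Finset.mem_Ico] at hk; exact hlineA x hx p k hk.1 (by omega)
    have k1 : (∏ k ∈ Finset.Ico 1 t, (1 - lineA n par x vlow q (busf k)))
        ≤ ∏ k ∈ Finset.Ico s t, (1 - lineA n par x vlow q (busf k)) := by
      rw [← eP]
      nlinarith
    have k2 : (∑ k ∈ Finset.Ico s t, lineA n par x vlow p (busf k))
        ≤ ∑ k ∈ Finset.Ico 1 t, lineA n par x vlow p (busf k) := by
      rw [← eS]; linarith
    have m1 := mul_le_mul_of_nonneg_right k1 hxi.le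
    have m2 := mul_le_mul_of_nonneg_right k2 hri.le
    linarith
  have main := chain_pos (Amat n par r x vlow p q) busf
    (fun k => lineA n par r vlow p (busf k)) (fun k => lineA n par r vlow q (busf k))
    (fun k => lineA n par x vlow p (busf k)) (fun k => lineA n par x vlow q (busf k))
    s t hst
    (fun k _ _ => Amat_eq n par r x vlow p q (busf k))
    (fun k hks hkt => hlineA r hr q k (by omega) (by omega))
    (fun k hks hkt => hlineA x hx p k (by omega) (by omega))
    (fun k hks hkt => ⟨hFa k (by omega) hkt, by
      have := hlineA r hr p k (by omega) (by omega); linarith⟩)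
    (fun k hks hkt => ⟨hFd k (by omega) hkt, by
      have := hlineA x hx q k (by omega) (by omega); linarith⟩)
    (r (busf t)) (x (busf t)) hri hxi key1 key2
  intro a0
  have h := main a0
  have hu : uvec r x (par^[N - t] l) = ![r (busf t), x (busf t)] := by
    rw [hbusfk t]
    rfl
  rw [hu]
  exact h
end
end
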